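/- Packing of the second stopping condition: there is an absolute constant C (independent of the dimension d) such that for every g ∈ L¹(J; ℂ^d) with ∫_J ‖g‖_{ℂ^d} > 0, every λ > 0, and every collection {L} of pairwise disjoint dyadic subintervals of J each satisfying Σ_{I∈D : L ⊆ I ⊆ J} ‖(g,h_I)‖²_{ℂ^d} / |I| > λ² · ( |J|^{-1} ∫_J ‖g(y)‖_{ℂ^d} dy )², one has Σ_L |L| ≤ C λ^{-1} |J|. In particular, each such L is contained in the set { x ∈ J : Sg(x) > λ · |J|^{-1} ∫_J ‖g‖_{ℂ^d} }, where Sg(x)² = Σ_{I∈D} ‖(g,h_I)‖²_{ℂ^d} χ_I(x)/|I| is the (unweighted) vector-valued dyadic square function, which is of weak type (1,1) with a universal constant. -/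

import Mathlib

open MeasureTheory Matrix Set ENNReal Filter
open scoped ComplexOrder

noncomputable section

/-- The dyadic interval `[k/2^n, (k+1)/2^n)`. -/
def dyadicI (n k : ℕ) : Set ℝ := Set.Ico ((k : ℝ) / 2 ^ n) (((k : ℝ) + 1) / 2 ^ n)

/-- `I` is a dyadic subinterval of `J = [0,1)`. -/
def IsDyadic (I : Set ℝ) : Prop := ∃ n k : ℕ, k < 2 ^ n ∧ I = dyadicI n k

/-- The length (Lebesgue measure) of a set, as a real number. -/
def len (I : Set ℝ) : ℝ := (volume I).toReal

/-- The `L²`-normalized Haar function of an interval `I = [a, b)`: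
`h_I = |I|^{-1/2} (χ_{I_+} - χ_{I_-})`. -/
def haar (I : Set ℝ) (x : ℝ) : ℝ :=
  (Real.sqrt (len I))⁻¹ *
    ((Set.Ico ((sInf I + sSup I) / 2) (sSup I)).indicator (fun _ => (1 : ℝ)) x
      - (Set.Ico (sInf I) ((sInf I + sSup I) / 2)).indicator (fun _ => (1 : ℝ)) x)

/-- The Haar coefficient `(f, h_I) = ∫_J f h_I ∈ ℂ^d` of a vector-valued function. -/
def haarCoef {d : ℕ} (f : ℝ → Fin d → ℂ) (I : Set ℝ) : Fin d → ℂ :=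
  ∫ x in Set.Ico (0 : ℝ) 1, haar I x • f x

/-- The Euclidean norm on `ℂ^d`. -/
def vnorm {d : ℕ} (v : Fin d → ℂ) : ℝ := Real.sqrt (∑ i, ‖v i‖ ^ 2)

/-- The (real) quadratic form `⟨M v, v⟩` of a matrix. -/
def qf {d : ℕ} (M : Matrix (Fin d) (Fin d) ℂ) (v : Fin d → ℂ) : ℝ :=
  (star v ⬝ᵥ M.mulVec v).re

/-- The entrywise average `⟨W⟩_I = |I|⁻¹ ∫_I W` of a matrix-valued function. -/
def mavg {d : ℕ} (W : ℝ → Matrix (Fin d) (Fin d) ℂ) (I : Set ℝ) :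
    Matrix (Fin d) (Fin d) ℂ :=
  Matrix.of fun i j => (len I : ℂ)⁻¹ * ∫ x in I, W x i j

open scoped Classical in
/-- The positive semidefinite square root of a positive semidefinite matrix
(junk value `0` otherwise). -/
def msqrt {d : ℕ} (M : Matrix (Fin d) (Fin d) ℂ) : Matrix (Fin d) (Fin d) ℂ :=
  if h : M.PosSemidef then
    h.1.eigenvectorUnitary.1 * diagonal ((↑) ∘ (√·) ∘ h.1.eigenvalues) *
      (star h.1.eigenvectorUnitary : Matrix (Fin d) (Fin d) ℂ)
  else 0

/-- The operator norm of a matrix acting on the Euclidean space `ℂ^d`. -/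
def opNorm {d : ℕ} (M : Matrix (Fin d) (Fin d) ℂ) : ℝ :=
  ‖Matrix.toEuclideanCLM (𝕜 := ℂ) M‖

/-- A `d × d` matrix weight on `J = [0,1)`: entrywise integrable and a.e. positive
semidefinite. -/
structure IsMatrixWeight {d : ℕ} (W : ℝ → Matrix (Fin d) (Fin d) ℂ) : Prop where
  integrable : ∀ i j, IntegrableOn (fun x => W x i j) (Set.Ico (0 : ℝ) 1)
  posSemidef : ∀ᵐ x ∂(volume.restrict (Set.Ico (0 : ℝ) 1)), (W x).PosSemidef

/-- Membership `f ∈ L²_{ℂ^d}(W)`: `f` is a.e. strongly measurable on `J = [0,1)` and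
`∫_J ⟨W f, f⟩ < ∞`. -/
def MemL2W {d : ℕ} (W : ℝ → Matrix (Fin d) (Fin d) ℂ) (f : ℝ → Fin d → ℂ) : Prop :=
  AEStronglyMeasurable f (volume.restrict (Set.Ico (0 : ℝ) 1)) ∧
    IntegrableOn (fun x => qf (W x) (f x)) (Set.Ico (0 : ℝ) 1)


lemma dyadic_lt (n k : ℕ) : (k : ℝ) / 2 ^ n < ((k : ℝ) + 1) / 2 ^ n := by
  rw [div_lt_div_iff_of_pos_right (by positivity)]; linarith

lemma dyadic_lt' (n k : ℕ) : (k : ℝ) / 2 ^ n < ((k : ℝ) + 1) / 2 ^ n := dyadic_lt n k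

lemma measurableSet_dyadicI (n k : ℕ) : MeasurableSet (dyadicI n k) := measurableSet_Ico

lemma volume_dyadicI (n k : ℕ) : volume (dyadicI n k) = ENNReal.ofReal (((2:ℝ) ^ n)⁻¹) := by
  rw [dyadicI, Real.volume_Ico]
  congr 1
  field_simp
  ring

lemma len_dyadicI (n k : ℕ) : len (dyadicI n k) = ((2:ℝ) ^ n)⁻¹ := by
  rw [len, volume_dyadicI, ENNReal.toReal_ofReal (by positivity)]

lemma len_dyadicI_pos (n k : ℕ) : 0 < len (dyadicI n k) := by
  rw [len_dyadicI]; positivity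

lemma dyadicI_nonempty (n k : ℕ) : (dyadicI n k).Nonempty :=
  Set.nonempty_Ico.2 (dyadic_lt n k)

lemma dyadicI_zero : dyadicI 0 0 = Set.Ico (0:ℝ) 1 := by
  simp [dyadicI]

lemma dyadicI_subset_unit {n k : ℕ} (hk : k < 2 ^ n) : dyadicI n k ⊆ Set.Ico (0:ℝ) 1 := by
  rw [dyadicI]
  rw [show (Set.Ico (0:ℝ) 1) = Set.Ico ((0:ℝ)) 1 from rfl]
  apply Set.Ico_subset_Ico
  · positivity
  · rw [div_le_one (by positivity)]
    have : (k : ℝ) + 1 ≤ (2:ℝ) ^ n := by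
      have := Nat.succ_le_of_lt hk
      exact_mod_cast this
    simpa using this

lemma dyadicI_subset_iff {n k m j : ℕ} :
    dyadicI m j ⊆ dyadicI n k ↔ n ≤ m ∧ j / 2 ^ (m - n) = k := by
  rw [dyadicI, dyadicI, Set.Ico_subset_Ico_iff (dyadic_lt m j)]
  constructor
  · rintro ⟨h1, h2⟩
    have hnm : n ≤ m := by
      have e1 : (1:ℝ)/2^m ≤ 1/2^n := by
        have a1 : ((j:ℝ)+1)/2^m = j/2^m + 1/2^m := by ring
        have a2 : ((k:ℝ)+1)/2^n = k/2^n + 1/2^n := by ring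
        linarith
      have e2 : ((2:ℝ))^n ≤ 2^m := by
        have h1 : (0:ℝ) < 2^m := by positivity
        have h2 : (0:ℝ) < 2^n := by positivity
        rw [div_le_div_iff₀ h1 h2] at e1
        linarith
      exact (pow_le_pow_iff_right₀ (by norm_num : (1:ℝ) < 2)).1 e2
    refine ⟨hnm, ?_⟩
    have hpow : ((2:ℝ))^m = 2^n * 2^(m-n) := by
      rw [← pow_add]; congr 1; omega
    have h2n : (0:ℝ) < 2^n := by positivity
    have h2mn : (0:ℝ) < 2^(m-n) := by positivity
    have e1 : (k:ℝ) * 2^(m-n) ≤ j := by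
      rw [div_le_div_iff₀ h2n (by positivity)] at h1
      nlinarith
    have e2 : (j:ℝ) + 1 ≤ ((k:ℝ)+1) * 2^(m-n) := by
      rw [div_le_div_iff₀ (by positivity) h2n] at h2
      nlinarith
    have e1' : k * 2^(m-n) ≤ j := by exact_mod_cast e1
    have e2' : j + 1 ≤ (k+1) * 2^(m-n) := by
      have : ((j:ℝ) + 1) ≤ ((k:ℝ)+1) * 2^(m-n) := e2
      exact_mod_cast (by push_cast; linarith : ((j:ℝ) + 1) ≤ (((k+1) * 2^(m-n) : ℕ) : ℝ))
    exact Nat.div_eq_of_lt_le e1' (by omega)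
  · rintro ⟨hnm, hdiv⟩
    have h2n : (0:ℝ) < 2^n := by positivity
    have h2m : (0:ℝ) < 2^m := by positivity
    have hpow : ((2:ℝ))^m = 2^n * 2^(m-n) := by
      rw [← pow_add]; congr 1; omega
    have e1 : k * 2^(m-n) ≤ j := by
      subst hdiv; exact Nat.div_mul_le_self j _
    have e2 : j + 1 ≤ (k+1) * 2^(m-n) := by
      subst hdiv
      have := (Nat.div_lt_iff_lt_mul (show 0 < 2^(m-n) by positivity)).1
        (Nat.lt_succ_self (j / 2^(m-n)))
      have h2 : (j / 2^(m-n) + 1) * 2^(m-n) = (j / 2^(m-n)).succ * 2^(m-n) := rfl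
      omega
    constructor
    · rw [div_le_div_iff₀ h2n h2m]
      have : ((k:ℝ)) * 2^(m-n) ≤ j := by exact_mod_cast e1
      nlinarith
    · rw [div_le_div_iff₀ h2m h2n]
      have : ((j:ℝ)) + 1 ≤ ((k:ℝ)+1) * 2^(m-n) := by exact_mod_cast e2
      nlinarith


-- continuation: assumes c1 content pasted above in final file
lemma dyadicI_subset_self_iff {n k j : ℕ} :
    dyadicI n j ⊆ dyadicI n k ↔ j = k := by
  rw [dyadicI_subset_iff]
  simp

lemma dyadicI_disjoint_same {n k j : ℕ} (h : j ≠ k) :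
    Disjoint (dyadicI n j) (dyadicI n k) := by
  rw [dyadicI, dyadicI, Set.Ico_disjoint_Ico]
  rcases lt_or_gt_of_ne h with h' | h'
  · have : ((j:ℝ)+1)/2^n ≤ (k:ℝ)/2^n := by
      apply div_le_div_of_nonneg_right ?_ ?_ |>.trans_eq rfl
      · exact_mod_cast Nat.succ_le_of_lt h'
      · positivity
    refine le_trans (min_le_left _ _) (le_trans this (le_max_right _ _))
  · have : ((k:ℝ)+1)/2^n ≤ (j:ℝ)/2^n := by
      apply div_le_div_of_nonneg_right ?_ ?_ |>.trans_eq rfl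
      · exact_mod_cast Nat.succ_le_of_lt h'
      · positivity
    refine le_trans (min_le_right _ _) (le_trans this (le_max_left _ _))

lemma dyadicI_nested_or_disjoint {n k m j : ℕ} (h : n ≤ m) :
    dyadicI m j ⊆ dyadicI n k ∨ Disjoint (dyadicI m j) (dyadicI n k) := by
  by_cases hd : j / 2^(m-n) = k
  · exact Or.inl (dyadicI_subset_iff.2 ⟨h, hd⟩)
  · right
    have h1 : dyadicI m j ⊆ dyadicI n (j / 2^(m-n)) :=
      dyadicI_subset_iff.2 ⟨h, rfl⟩
    exact (dyadicI_disjoint_same hd).mono_left h1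

lemma dyadicI_inj {n k m j : ℕ} (h : dyadicI n k = dyadicI m j) : n = m ∧ k = j := by
  have h1 : dyadicI n k ⊆ dyadicI m j := h.le
  have h2 : dyadicI m j ⊆ dyadicI n k := h.ge
  rw [dyadicI_subset_iff] at h1 h2
  have hnm : n = m := le_antisymm h2.1 h1.1
  subst hnm
  refine ⟨rfl, ?_⟩
  have := h1.2
  simpa using this

lemma dyadicI_strict_subset_gen {n k m j : ℕ} (h : dyadicI m j ⊆ dyadicI n k)
    (hne : dyadicI m j ≠ dyadicI n k) : n < m := by
  rcases dyadicI_subset_iff.1 h with ⟨h1, h2⟩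
  rcases lt_or_eq_of_le h1 with h' | h'
  · exact h'
  · exfalso; subst h'; apply hne
    simp at h2; subst h2; rfl

lemma dyadicI_eq_biUnion {n k N : ℕ} (h : n ≤ N) :
    dyadicI n k = ⋃ j ∈ Finset.Ico (k * 2^(N-n)) ((k+1) * 2^(N-n)), dyadicI N j := by
  have hp : 0 < 2^(N-n) := Nat.pow_pos (by norm_num)
  apply Set.Subset.antisymm
  · intro x hx
    have hx0 : 0 ≤ x := by
      have := hx.1
      have h0 : (0:ℝ) ≤ (k:ℝ)/2^n := by positivity
      exact le_trans h0 this
    set j := ⌊x * 2^N⌋₊ with hj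
    have h2N : (0:ℝ) < 2^N := by positivity
    have hxj : x ∈ dyadicI N j := by
      rw [dyadicI, Set.mem_Ico]
      constructor
      · rw [div_le_iff₀ h2N]
        exact Nat.floor_le (by positivity)
      · rw [lt_div_iff₀ h2N]
        exact Nat.lt_floor_add_one _
    have hsub : dyadicI N j ⊆ dyadicI n k := by
      rcases dyadicI_nested_or_disjoint (k := k) (j := j) h with hs | hd
      · exact hs
      · exact absurd rfl (hd.ne_of_mem hxj hx)
    rcases dyadicI_subset_iff.1 hsub with ⟨-, hdiv⟩
    refine Set.mem_iUnion₂.2 ⟨j, ?_, hxj⟩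
    rw [Finset.mem_Ico]
    constructor
    · rw [← hdiv]; exact Nat.div_mul_le_self j _
    · have h1 := (Nat.div_lt_iff_lt_mul hp).1 (Nat.lt_succ_self (j / 2^(N-n)))
      have h2 : (j / 2^(N-n)).succ * 2^(N-n) = (j / 2^(N-n) + 1) * 2^(N-n) := rfl
      rw [h2, hdiv] at h1
      exact h1
  · intro x hx
    rcases Set.mem_iUnion₂.1 hx with ⟨j, hj, hxj⟩
    rw [Finset.mem_Ico] at hj
    have : dyadicI N j ⊆ dyadicI n k :=
      dyadicI_subset_iff.2 ⟨h, Nat.div_eq_of_lt_le hj.1 hj.2⟩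
    exact this hxj


lemma sqrt_len_inv (n : ℕ) : (Real.sqrt (((2:ℝ)^n)⁻¹))⁻¹ = Real.sqrt ((2:ℝ)^n) := by
  rw [Real.sqrt_inv, inv_inv]

lemma haar_dyadicI (n k : ℕ) (x : ℝ) :
    haar (dyadicI n k) x = Real.sqrt ((2:ℝ)^n) *
      ((dyadicI (n+1) (2*k+1)).indicator (fun _ => (1:ℝ)) x
        - (dyadicI (n+1) (2*k)).indicator (fun _ => (1:ℝ)) x) := by
  have hinf : sInf (dyadicI n k) = (k:ℝ)/2^n := csInf_Ico (dyadic_lt n k)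
  have hsup : sSup (dyadicI n k) = ((k:ℝ)+1)/2^n := csSup_Ico (dyadic_lt n k)
  have m1 : ((k:ℝ)/2^n + (((k:ℝ)+1)/2^n))/2 = ((2*k+1 : ℕ):ℝ)/2^(n+1) := by
    push_cast; field_simp; ring
  have m2 : ((k:ℝ)+1)/2^n = (((2*k+1 : ℕ):ℝ)+1)/2^(n+1) := by
    push_cast; field_simp; ring
  have m3 : (k:ℝ)/2^n = ((2*k : ℕ):ℝ)/2^(n+1) := by
    push_cast; field_simp; ring
  have m4 : ((2*k+1 : ℕ):ℝ)/2^(n+1) = (((2*k:ℕ):ℝ)+1)/2^(n+1) := by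
    push_cast; ring
  have e1 : Set.Ico (((k:ℝ)/2^n + (((k:ℝ)+1)/2^n))/2) (((k:ℝ)+1)/2^n)
      = dyadicI (n+1) (2*k+1) := by
    rw [dyadicI, m1, m2]
  have e2 : Set.Ico ((k:ℝ)/2^n) (((k:ℝ)/2^n + (((k:ℝ)+1)/2^n))/2)
      = dyadicI (n+1) (2*k) := by
    rw [dyadicI, m1, m4, m3]
  unfold haar
  rw [len_dyadicI, sqrt_len_inv, hinf, hsup, e1, e2]

lemma dyadicI_left_subset (n k : ℕ) : dyadicI (n+1) (2*k) ⊆ dyadicI n k :=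
  dyadicI_subset_iff.2 ⟨Nat.le_succ n,
    by have h : n+1-n = 1 := by omega
       rw [h, pow_one]; omega⟩

lemma dyadicI_right_subset (n k : ℕ) : dyadicI (n+1) (2*k+1) ⊆ dyadicI n k :=
  dyadicI_subset_iff.2 ⟨Nat.le_succ n,
    by have h : n+1-n = 1 := by omega
       rw [h, pow_one]; omega⟩

lemma dyadicI_split (n k : ℕ) :
    dyadicI n k = dyadicI (n+1) (2*k) ∪ dyadicI (n+1) (2*k+1) := by
  rw [dyadicI_eq_biUnion (Nat.le_succ n)]
  ext x
  simp only [Set.mem_iUnion₂, Set.mem_union]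
  constructor
  · rintro ⟨j, hj, hx⟩
    rw [Finset.mem_Ico] at hj
    have : j = 2*k ∨ j = 2*k+1 := by
      have h : n+1-n = 1 := by omega
      rw [h, pow_one] at hj
      omega
    rcases this with h | h <;> [left; right] <;> rwa [← h]
  · rintro (hx | hx)
    · refine ⟨2*k, ?_, hx⟩
      rw [Finset.mem_Ico]
      have h : n+1-n = 1 := by omega
      rw [h, pow_one]; omega
    · refine ⟨2*k+1, ?_, hx⟩
      rw [Finset.mem_Ico]
      have h : n+1-n = 1 := by omega
      rw [h, pow_one]; omega

lemma haar_eq_zero {n k : ℕ} {x : ℝ} (hx : x ∉ dyadicI n k) : haar (dyadicI n k) x = 0 := by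
  rw [haar_dyadicI]
  rw [Set.indicator_of_notMem (fun h => hx (dyadicI_right_subset n k h)),
    Set.indicator_of_notMem (fun h => hx (dyadicI_left_subset n k h))]
  ring

lemma haar_on_left {n k : ℕ} {x : ℝ} (hx : x ∈ dyadicI (n+1) (2*k)) :
    haar (dyadicI n k) x = -Real.sqrt ((2:ℝ)^n) := by
  rw [haar_dyadicI]
  have hx' : x ∉ dyadicI (n+1) (2*k+1) :=
    fun h => (dyadicI_disjoint_same (by omega : 2*k ≠ 2*k+1)).ne_of_mem hx h rfl
  rw [Set.indicator_of_notMem hx', Set.indicator_of_mem hx]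
  ring

lemma haar_on_right {n k : ℕ} {x : ℝ} (hx : x ∈ dyadicI (n+1) (2*k+1)) :
    haar (dyadicI n k) x = Real.sqrt ((2:ℝ)^n) := by
  rw [haar_dyadicI]
  have hx' : x ∉ dyadicI (n+1) (2*k) :=
    fun h => (dyadicI_disjoint_same (by omega : 2*k+1 ≠ 2*k)).ne_of_mem hx h rfl
  rw [Set.indicator_of_notMem hx', Set.indicator_of_mem hx]
  ring

lemma abs_haar_le (n k : ℕ) (x : ℝ) : |haar (dyadicI n k) x| ≤ Real.sqrt ((2:ℝ)^n) := by
  by_cases hx : x ∈ dyadicI n k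
  · rcases (dyadicI_split n k ▸ hx : x ∈ _ ∪ _) with h | h
    · rw [haar_on_left h, abs_neg, abs_of_nonneg (Real.sqrt_nonneg _)]
    · rw [haar_on_right h, abs_of_nonneg (Real.sqrt_nonneg _)]
  · rw [haar_eq_zero hx]
    simp [Real.sqrt_nonneg]

lemma haar_sq {n k : ℕ} (x : ℝ) :
    (haar (dyadicI n k) x)^2 = (2:ℝ)^n * (dyadicI n k).indicator (fun _ => (1:ℝ)) x := by
  by_cases hx : x ∈ dyadicI n k
  · rw [Set.indicator_of_mem hx]
    rcases (dyadicI_split n k ▸ hx : x ∈ _ ∪ _) with h | h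
    · rw [haar_on_left h]
      rw [neg_pow]
      simp [Real.sq_sqrt (by positivity : (0:ℝ) ≤ (2:ℝ)^n)]
    · rw [haar_on_right h]
      simp [Real.sq_sqrt (by positivity : (0:ℝ) ≤ (2:ℝ)^n)]
  · rw [haar_eq_zero hx, Set.indicator_of_notMem hx]
    ring

lemma measurable_haar (I : Set ℝ) : Measurable (haar I) := by
  unfold haar
  exact (measurable_const.mul (((measurable_indicator_const_iff 1).2 measurableSet_Ico).sub
    ((measurable_indicator_const_iff 1).2 measurableSet_Ico)))

lemma haar_const_on {n k m j : ℕ} (hm : n < m)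
    (h : dyadicI m j ⊆ dyadicI n k ∨ Disjoint (dyadicI m j) (dyadicI n k)) :
    ∃ c : ℝ, |c| ≤ Real.sqrt ((2:ℝ)^n) ∧ ∀ x ∈ dyadicI m j, haar (dyadicI n k) x = c := by
  rcases h with hsub | hdis
  · rcases dyadicI_nested_or_disjoint (n := n+1) (k := 2*k) (m := m) (j := j) hm with hs | hd
    · exact ⟨-Real.sqrt ((2:ℝ)^n), by simp [abs_of_nonneg (Real.sqrt_nonneg _)],
        fun x hx => haar_on_left (hs hx)⟩
    · refine ⟨Real.sqrt ((2:ℝ)^n), by simp [abs_of_nonneg (Real.sqrt_nonneg _)],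
        fun x hx => haar_on_right ?_⟩
      have := hsub hx
      rcases (dyadicI_split n k ▸ this : x ∈ _ ∪ _) with h' | h'
      · exact absurd rfl (hd.ne_of_mem hx h')
      · exact h'
  · exact ⟨0, by simp, fun x hx => haar_eq_zero (fun h' => hdis.ne_of_mem hx h' rfl)⟩


section vnorm
variable {d : ℕ}

lemma vnorm_nonneg (v : Fin d → ℂ) : 0 ≤ vnorm v := Real.sqrt_nonneg _

lemma vnorm_sq (v : Fin d → ℂ) : vnorm v ^ 2 = ∑ i, ‖v i‖ ^ 2 := by
  rw [vnorm, Real.sq_sqrt]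
  positivity

lemma vnorm_eq_norm (v : Fin d → ℂ) :
    vnorm v = ‖(EuclideanSpace.equiv (Fin d) ℂ).symm v‖ := by
  rw [EuclideanSpace.norm_eq]
  rfl

lemma coord_le_vnorm (v : Fin d → ℂ) (i : Fin d) : ‖v i‖ ≤ vnorm v := by
  rw [vnorm]
  rw [show ‖v i‖ = Real.sqrt (‖v i‖^2) by rw [Real.sqrt_sq (norm_nonneg _)]]
  apply Real.sqrt_le_sqrt
  exact Finset.single_le_sum (f := fun i => ‖v i‖^2) (fun i _ => by positivity) (Finset.mem_univ i)

lemma vnorm_le_sum (v : Fin d → ℂ) : vnorm v ≤ ∑ i, ‖v i‖ := by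
  rw [vnorm]
  have h1 : ∑ i, ‖v i‖^2 ≤ (∑ i, ‖v i‖)^2 := by
    apply Finset.sum_sq_le_sq_sum_of_nonneg
    intro i _
    exact norm_nonneg _
  refine (Real.sqrt_le_sqrt h1).trans ?_
  rw [Real.sqrt_sq (by positivity)]

lemma vnorm_smul (c : ℝ) (v : Fin d → ℂ) : vnorm (c • v) = |c| * vnorm v := by
  rw [vnorm, vnorm]
  have : ∀ i, ‖(c • v) i‖^2 = c^2 * ‖v i‖^2 := by
    intro i
    rw [Pi.smul_apply, norm_smul]
    simp [mul_pow, Real.norm_eq_abs, sq_abs]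
  simp only [this]
  rw [← Finset.mul_sum, Real.sqrt_mul (by positivity), Real.sqrt_sq_eq_abs]

lemma continuous_vnorm : Continuous (vnorm (d := d)) := by
  unfold vnorm
  exact Real.continuous_sqrt.comp (continuous_finset_sum _ (fun i _ =>
    ((continuous_apply i).norm.pow 2)))

lemma integrableOn_vnorm {f : ℝ → Fin d → ℂ} {s : Set ℝ}
    (hf : IntegrableOn f s) : IntegrableOn (fun x => vnorm (f x)) s := by
  apply Integrable.mono' (g := fun x => ∑ i, ‖f x i‖)
  · apply integrable_finset_sum
    intro i _
    exact ((ContinuousLinearMap.proj i : (Fin d → ℂ) →L[ℂ] ℂ).integrable_comp hf).norm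
  · exact continuous_vnorm.comp_aestronglyMeasurable hf.aestronglyMeasurable
  · refine Filter.Eventually.of_forall (fun x => ?_)
    rw [Real.norm_eq_abs, abs_of_nonneg (vnorm_nonneg _)]
    exact vnorm_le_sum _

lemma vnorm_setIntegral_le {f : ℝ → Fin d → ℂ} {s : Set ℝ} (hf : IntegrableOn f s) :
    vnorm (∫ x in s, f x) ≤ ∫ x in s, vnorm (f x) := by
  rw [vnorm_eq_norm]
  have : (EuclideanSpace.equiv (Fin d) ℂ).symm (∫ x in s, f x)
      = ∫ x in s, (EuclideanSpace.equiv (Fin d) ℂ).symm (f x) :=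
    ((EuclideanSpace.equiv (Fin d) ℂ).symm.integral_comp_comm f).symm
  rw [this]
  refine (norm_integral_le_integral_norm _).trans ?_
  apply le_of_eq
  apply integral_congr_ae
  refine Filter.Eventually.of_forall (fun x => ?_)
  exact (vnorm_eq_norm _).symm

lemma integrableOn_smul_bdd {φ : ℝ → ℝ} {f : ℝ → Fin d → ℂ} {s : Set ℝ} {C : ℝ}
    (hφm : Measurable φ) (hφb : ∀ x, |φ x| ≤ C) (hf : IntegrableOn f s) :
    IntegrableOn (fun x => φ x • f x) s := by
  apply Integrable.mono' (g := fun x => C * ‖f x‖)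
  · exact hf.norm.const_mul C
  · exact (hφm.aestronglyMeasurable.restrict).smul hf.aestronglyMeasurable
  · refine Filter.Eventually.of_forall (fun x => ?_)
    rw [norm_smul, Real.norm_eq_abs]
    have h0 : 0 ≤ C := le_trans (abs_nonneg _) (hφb x)
    exact mul_le_mul_of_nonneg_right (hφb x) (norm_nonneg _)

end vnorm

section stopping
variable {d : ℕ}

def Heavy (g : ℝ → Fin d → ℂ) (lam : ℝ) (n k : ℕ) : Prop :=
  lam * (∫ y in Set.Ico (0:ℝ) 1, vnorm (g y)) * len (dyadicI n k) < ∫ x in dyadicI n k, vnorm (g x)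

def MaxHeavy (g : ℝ → Fin d → ℂ) (lam : ℝ) (n k : ℕ) : Prop :=
  Heavy g lam n k ∧ ∀ m j : ℕ, dyadicI n k ⊆ dyadicI m j → dyadicI n k ≠ dyadicI m j →
    ¬Heavy g lam m j

def GoodI (g : ℝ → Fin d → ℂ) (lam : ℝ) (n k : ℕ) : Prop :=
  ∀ m j : ℕ, dyadicI n k ⊆ dyadicI m j → ¬Heavy g lam m j

variable {g : ℝ → Fin d → ℂ} {lam : ℝ}

lemma dyadicI_valid_of_subset {n k m j : ℕ} (hk : k < 2^n)
    (h : dyadicI n k ⊆ dyadicI m j) : j < 2^m := by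
  rcases dyadicI_subset_iff.1 h with ⟨hmn, hdiv⟩
  subst hdiv
  rw [Nat.div_lt_iff_lt_mul (Nat.pow_pos (by norm_num))]
  calc k < 2^n := hk
  _ ≤ 2^m * 2^(n-m) := by rw [← pow_add]; apply Nat.pow_le_pow_right <;> omega

lemma exists_maxHeavy {n k : ℕ} (hk : k < 2^n) (h : Heavy g lam n k) :
    ∃ m j, j < 2^m ∧ dyadicI n k ⊆ dyadicI m j ∧ MaxHeavy g lam m j := by
  induction n using Nat.strong_induction_on generalizing k with
  | _ n ih =>
    by_cases hmax : ∀ m j : ℕ, dyadicI n k ⊆ dyadicI m j → dyadicI n k ≠ dyadicI m j →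
        ¬Heavy g lam m j
    · exact ⟨n, k, hk, subset_rfl, h, hmax⟩
    · push_neg at hmax
      obtain ⟨m, j, hsub, hne, hh⟩ := hmax
      have hj : j < 2^m := dyadicI_valid_of_subset hk hsub
      have hmn : m < n := dyadicI_strict_subset_gen hsub hne
      obtain ⟨m', j', h1, h2, h3⟩ := ih m hmn hj hh
      exact ⟨m', j', h1, hsub.trans h2, h3⟩

lemma maxHeavy_disjoint {n k m j : ℕ} (h1 : MaxHeavy g lam n k) (h2 : MaxHeavy g lam m j)
    (hne : (n, k) ≠ (m, j)) : Disjoint (dyadicI n k) (dyadicI m j) := by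
  have hne' : dyadicI n k ≠ dyadicI m j := by
    intro h
    rcases dyadicI_inj h with ⟨e1, e2⟩
    exact hne (by rw [e1, e2])
  rcases le_total n m with hnm | hnm
  · rcases dyadicI_nested_or_disjoint (k := k) (j := j) hnm with hs | hd
    · exact absurd h1.1 (h2.2 n k hs (Ne.symm hne'))
    · exact hd.symm
  · rcases dyadicI_nested_or_disjoint (k := j) (j := k) hnm with hs | hd
    · exact absurd h2.1 (h1.2 m j hs hne')
    · exact hd

lemma not_heavy_root (hlam : 1 ≤ lam) (hA : 0 ≤ ∫ y in Set.Ico (0:ℝ) 1, vnorm (g y)) :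
    ¬Heavy g lam 0 0 := by
  rw [Heavy, dyadicI_zero, len]
  rw [Real.volume_Ico]
  norm_num
  nlinarith

-- The collection of maximal heavy pairs
def MHset (g : ℝ → Fin d → ℂ) (lam : ℝ) : Set (ℕ × ℕ) :=
  {p : ℕ × ℕ | p.2 < 2^p.1 ∧ MaxHeavy g lam p.1 p.2}

lemma measure_biUnion_maxHeavy (hg : IntegrableOn g (Set.Ico (0:ℝ) 1))
    (hA : 0 < ∫ y in Set.Ico (0:ℝ) 1, vnorm (g y)) (hlam : 0 < lam) :
    volume (⋃ p ∈ MHset g lam, dyadicI p.1 p.2) ≤ ENNReal.ofReal (lam⁻¹) := by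
  set A := ∫ y in Set.Ico (0:ℝ) 1, vnorm (g y) with hAdef
  have hcnt : (MHset g lam).Countable := Set.to_countable _
  have hmeas : ∀ p ∈ MHset g lam, MeasurableSet (dyadicI p.1 p.2) :=
    fun p _ => measurableSet_dyadicI _ _
  have hdisj : (MHset g lam).PairwiseDisjoint (fun p : ℕ × ℕ => dyadicI p.1 p.2) := by
    intro p hp q hq hne
    exact maxHeavy_disjoint hp.2 hq.2 (by exact fun h => hne (by
      rcases p with ⟨a,b⟩; rcases q with ⟨c,e⟩; simpa using h))
  set ν := (volume.restrict (Set.Ico (0:ℝ) 1)).withDensity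
    (fun x => ENNReal.ofReal (vnorm (g x))) with hν
  have hνQ : ∀ p ∈ MHset g lam,
      ν (dyadicI p.1 p.2) = ENNReal.ofReal (∫ x in dyadicI p.1 p.2, vnorm (g x)) := by
    rintro ⟨n, k⟩ hp
    rw [hν, withDensity_apply _ (measurableSet_dyadicI n k)]
    rw [Measure.restrict_restrict (measurableSet_dyadicI n k)]
    rw [Set.inter_eq_self_of_subset_left (dyadicI_subset_unit hp.1)]
    rw [ofReal_integral_eq_lintegral_ofReal]
    · exact (integrableOn_vnorm hg).mono_set (dyadicI_subset_unit hp.1)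
    · exact Filter.Eventually.of_forall (fun x => vnorm_nonneg _)
  have key : ∀ p ∈ MHset g lam,
      ENNReal.ofReal (lam * A) * volume (dyadicI p.1 p.2) ≤ ν (dyadicI p.1 p.2) := by
    rintro ⟨n, k⟩ hp
    rw [hνQ _ hp]
    have hh := hp.2.1
    rw [Heavy] at hh
    have hvol : volume (dyadicI n k) = ENNReal.ofReal (len (dyadicI n k)) := by
      rw [volume_dyadicI, len_dyadicI]
    rw [hvol, ← ENNReal.ofReal_mul (by positivity)]
    exact ENNReal.ofReal_le_ofReal (le_of_lt hh)
  rw [measure_biUnion hcnt hdisj hmeas]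
  have hsum : ENNReal.ofReal (lam * A) * ∑' (p : MHset g lam), volume (dyadicI p.1.1 p.1.2)
      ≤ ENNReal.ofReal A := by
    rw [← ENNReal.tsum_mul_left]
    calc ∑' (p : MHset g lam), ENNReal.ofReal (lam * A) * volume (dyadicI p.1.1 p.1.2)
        ≤ ∑' (p : MHset g lam), ν (dyadicI p.1.1 p.1.2) :=
          ENNReal.tsum_le_tsum (fun p => key p.1 p.2)
      _ = ν (⋃ p ∈ MHset g lam, dyadicI p.1 p.2) :=
          (measure_biUnion hcnt hdisj hmeas).symm
      _ ≤ ν Set.univ := measure_mono (Set.subset_univ _)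
      _ ≤ ENNReal.ofReal A := by
          rw [hν, withDensity_apply _ MeasurableSet.univ, Measure.restrict_univ]
          rw [← ofReal_integral_eq_lintegral_ofReal (integrableOn_vnorm hg)
            (Filter.Eventually.of_forall (fun x => vnorm_nonneg _))]
  have hpos : 0 < lam * A := by positivity
  have hne0 : ENNReal.ofReal (lam * A) ≠ 0 := by
    simp [ENNReal.ofReal_eq_zero]; linarith
  have hnetop : ENNReal.ofReal (lam * A) ≠ ⊤ := ENNReal.ofReal_ne_top
  calc ∑' (p : MHset g lam), volume (dyadicI p.1.1 p.1.2)
      ≤ ENNReal.ofReal A / ENNReal.ofReal (lam * A) := by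
        rw [ENNReal.le_div_iff_mul_le (Or.inl hne0) (Or.inl hnetop), mul_comm]
        exact hsum
    _ ≤ ENNReal.ofReal lam⁻¹ := by
        apply ENNReal.div_le_of_le_mul
        rw [← ENNReal.ofReal_mul (by positivity)]
        apply ENNReal.ofReal_le_ofReal
        rw [inv_mul_eq_div, mul_comm lam A, mul_div_assoc, div_self (by linarith)]
        simp

end stopping

section haarint

instance : IsFiniteMeasure (volume.restrict (Set.Ico (0:ℝ) 1)) := by
  constructor
  rw [Measure.restrict_apply_univ, Real.volume_Ico]
  exact ENNReal.ofReal_lt_top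

lemma integral_indicator_dyadicI {n k : ℕ} (hk : k < 2^n) :
    ∫ x in Set.Ico (0:ℝ) 1, (dyadicI n k).indicator (fun _ => (1:ℝ)) x = len (dyadicI n k) := by
  rw [show (fun _ => (1:ℝ)) = (1 : ℝ → ℝ) from rfl]
  rw [integral_indicator_one (measurableSet_dyadicI n k)]
  rw [Measure.real, Measure.restrict_apply (measurableSet_dyadicI n k),
    Set.inter_eq_self_of_subset_left (dyadicI_subset_unit hk), len]

lemma integrableOn_indicator_dyadicI (n k : ℕ) :
    IntegrableOn (fun x => (dyadicI n k).indicator (fun _ => (1:ℝ)) x) (Set.Ico (0:ℝ) 1) := by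
  rw [show (fun x => (dyadicI n k).indicator (fun _ => (1:ℝ)) x)
    = (dyadicI n k).indicator (fun _ => (1:ℝ)) from rfl]
  exact (integrable_const (1:ℝ)).indicator (measurableSet_dyadicI n k)

lemma integrableOn_haar (n k : ℕ) : IntegrableOn (haar (dyadicI n k)) (Set.Ico (0:ℝ) 1) := by
  apply Integrable.mono' (g := fun _ => Real.sqrt ((2:ℝ)^n))
  · exact integrable_const _
  · exact (measurable_haar _).aestronglyMeasurable
  · exact Filter.Eventually.of_forall (fun x => abs_haar_le n k x)

lemma integral_haar {n k : ℕ} (hk : k < 2^n) :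
    ∫ x in Set.Ico (0:ℝ) 1, haar (dyadicI n k) x = 0 := by
  have hr : 2*k+1 < 2^(n+1) := by rw [pow_succ]; omega
  have hl : 2*k < 2^(n+1) := by rw [pow_succ]; omega
  simp only [haar_dyadicI]
  rw [integral_const_mul]
  rw [integral_sub (integrableOn_indicator_dyadicI _ _) (integrableOn_indicator_dyadicI _ _)]
  rw [integral_indicator_dyadicI hr, integral_indicator_dyadicI hl, len_dyadicI, len_dyadicI]
  simp

lemma integral_haar_sq {n k : ℕ} (hk : k < 2^n) :
    ∫ x in Set.Ico (0:ℝ) 1, (haar (dyadicI n k) x)^2 = 1 := by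
  simp only [haar_sq]
  rw [integral_const_mul, integral_indicator_dyadicI hk, len_dyadicI]
  field_simp

lemma integral_haar_mul_haar_same {n k j : ℕ} (hne : j ≠ k) :
    ∫ x in Set.Ico (0:ℝ) 1, haar (dyadicI n j) x * haar (dyadicI n k) x = 0 := by
  have hz : ∀ x, haar (dyadicI n j) x * haar (dyadicI n k) x = 0 := by
    intro x
    by_cases hx : x ∈ dyadicI n j
    · have : x ∉ dyadicI n k := fun h => (dyadicI_disjoint_same hne).ne_of_mem hx h rfl
      rw [haar_eq_zero this, mul_zero]
    · rw [haar_eq_zero hx, zero_mul]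
  rw [show (fun x => haar (dyadicI n j) x * haar (dyadicI n k) x) = fun _ => (0:ℝ)
    from funext hz]
  simp

lemma integral_haar_mul_haar_lt {n k m j : ℕ} (hj : j < 2^m) (h : n < m) :
    ∫ x in Set.Ico (0:ℝ) 1, haar (dyadicI n k) x * haar (dyadicI m j) x = 0 := by
  rcases dyadicI_nested_or_disjoint (k := k) (j := j) h.le with hs | hd
  · obtain ⟨c, -, hc⟩ := haar_const_on h (Or.inl hs)
    have hz : ∀ x, haar (dyadicI n k) x * haar (dyadicI m j) x = c * haar (dyadicI m j) x := by
      intro x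
      by_cases hx : x ∈ dyadicI m j
      · rw [hc x hx]
      · rw [haar_eq_zero hx, mul_zero, mul_zero]
    rw [show (fun x => haar (dyadicI n k) x * haar (dyadicI m j) x)
      = fun x => c * haar (dyadicI m j) x from funext hz]
    rw [integral_const_mul, integral_haar hj, mul_zero]
  · have hz : ∀ x, haar (dyadicI n k) x * haar (dyadicI m j) x = 0 := by
      intro x
      by_cases hx : x ∈ dyadicI m j
      · rw [haar_eq_zero (fun h' => hd.ne_of_mem hx h' rfl), zero_mul]
      · rw [haar_eq_zero hx, mul_zero]
    rw [show (fun x => haar (dyadicI n k) x * haar (dyadicI m j) x) = fun _ => (0:ℝ)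
      from funext hz]
    simp

end haarint

section L2setup

abbrev DPair := Σ n : ℕ, Fin (2^n)

local notation "μ₀" => volume.restrict (Set.Ico (0:ℝ) 1)

lemma memL2_haarC (n k : ℕ) : MemLp (fun x => (haar (dyadicI n k) x : ℂ)) 2 μ₀ := by
  have hm : AEStronglyMeasurable (fun x => (haar (dyadicI n k) x : ℂ)) μ₀ :=
    (Complex.measurable_ofReal.comp (measurable_haar _)).aestronglyMeasurable
  apply MemLp.of_bound hm (Real.sqrt ((2:ℝ)^n))
  refine Filter.Eventually.of_forall (fun x => ?_)
  rw [Complex.norm_real]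
  exact abs_haar_le n k x

def haarLp (p : DPair) : Lp ℂ 2 μ₀ := (memL2_haarC p.1 p.2).toLp _

lemma coeFn_haarLp (p : DPair) :
    (haarLp p : ℝ → ℂ) =ᶠ[ae μ₀] fun x => (haar (dyadicI p.1 p.2) x : ℂ) :=
  MemLp.coeFn_toLp _

lemma inner_haarLp_toLp (p : DPair) {φ : ℝ → ℂ} (hφ : MemLp φ 2 μ₀) :
    (inner ℂ (haarLp p) (hφ.toLp φ) : ℂ)
      = ∫ x in Set.Ico (0:ℝ) 1, (haar (dyadicI p.1 p.2) x : ℂ) * φ x := by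
  rw [MeasureTheory.L2.inner_def]
  apply integral_congr_ae
  filter_upwards [coeFn_haarLp p, MemLp.coeFn_toLp hφ] with x h1 h2
  rw [RCLike.inner_apply, h1, h2, Complex.conj_ofReal, mul_comm]

lemma inner_haarLp_haarLp (p q : DPair) :
    (inner ℂ (haarLp p) (haarLp q) : ℂ)
      = ((∫ x in Set.Ico (0:ℝ) 1, haar (dyadicI p.1 p.2) x * haar (dyadicI q.1 q.2) x : ℝ) : ℂ) := by
  rw [show haarLp q = (memL2_haarC q.1 q.2).toLp _ from rfl, inner_haarLp_toLp]
  calc ∫ x in Set.Ico (0:ℝ) 1, (haar (dyadicI p.1 p.2) x : ℂ) * (haar (dyadicI q.1 q.2) x : ℂ)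
      = ∫ x in Set.Ico (0:ℝ) 1,
          ((haar (dyadicI p.1 p.2) x * haar (dyadicI q.1 q.2) x : ℝ) : ℂ) := by
        apply integral_congr_ae
        refine Filter.Eventually.of_forall (fun x => ?_)
        push_cast
        ring
    _ = _ := integral_ofReal

lemma orthonormal_haarLp : Orthonormal ℂ haarLp := by
  classical
  rw [orthonormal_iff_ite]
  intro i j
  rw [inner_haarLp_haarLp]
  by_cases h : i = j
  · subst h
    rcases i with ⟨n, k⟩
    simp only [if_pos rfl]
    have : ∀ x : ℝ, haar (dyadicI n (k:ℕ)) x * haar (dyadicI n (k:ℕ)) x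
        = (haar (dyadicI n (k:ℕ)) x)^2 := fun x => (sq _).symm
    rw [show (fun x => haar (dyadicI n (k:ℕ)) x * haar (dyadicI n (k:ℕ)) x)
      = fun x => (haar (dyadicI n (k:ℕ)) x)^2 from funext this]
    rw [integral_haar_sq k.isLt]
    norm_num
  · rw [if_neg h]
    rcases i with ⟨n, k⟩
    rcases j with ⟨m, j⟩
    rcases lt_trichotomy n m with hnm | hnm | hnm
    · rw [integral_haar_mul_haar_lt j.isLt hnm]; norm_num
    · subst hnm
      have hkj : (k:ℕ) ≠ (j:ℕ) := by
        intro he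
        exact h (by rw [Fin.ext he])
      rw [integral_haar_mul_haar_same hkj]
      norm_num
    · have : ∀ x : ℝ, haar (dyadicI n (k:ℕ)) x * haar (dyadicI m (j:ℕ)) x
          = haar (dyadicI m (j:ℕ)) x * haar (dyadicI n (k:ℕ)) x := fun x => mul_comm _ _
      rw [show (fun x => haar (dyadicI n (k:ℕ)) x * haar (dyadicI m (j:ℕ)) x)
        = fun x => haar (dyadicI m (j:ℕ)) x * haar (dyadicI n (k:ℕ)) x from funext this]
      rw [integral_haar_mul_haar_lt k.isLt hnm]
      norm_num

lemma norm_toLp_sq_eq {φ : ℝ → ℂ} (hφ : MemLp φ 2 μ₀) :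
    ‖hφ.toLp φ‖^2 = ∫ x in Set.Ico (0:ℝ) 1, ‖φ x‖^2 := by
  have h1 := inner_self_eq_norm_sq (𝕜 := ℂ) (hφ.toLp φ)
  have h2 : (∫ a, (inner ℂ ((hφ.toLp φ : Lp ℂ 2 μ₀) a) ((hφ.toLp φ : Lp ℂ 2 μ₀) a) : ℂ) ∂μ₀)
      = ((∫ x in Set.Ico (0:ℝ) 1, ‖φ x‖^2 : ℝ) : ℂ) := by
    calc (∫ a, (inner ℂ ((hφ.toLp φ : Lp ℂ 2 μ₀) a) ((hφ.toLp φ : Lp ℂ 2 μ₀) a) : ℂ) ∂μ₀)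
        = ∫ a in Set.Ico (0:ℝ) 1, ((‖φ a‖^2 : ℝ) : ℂ) := by
          apply integral_congr_ae
          filter_upwards [hφ.coeFn_toLp] with x hx
          rw [RCLike.inner_apply, hx, RCLike.mul_conj]
          norm_cast
      _ = _ := integral_ofReal
  rw [← h1, MeasureTheory.L2.inner_def, h2]
  exact Complex.ofReal_re _

lemma bessel_haar {φ : ℝ → ℂ} (hφ : MemLp φ 2 μ₀) (F : Finset DPair) :
    ∑ p ∈ F, ‖∫ x in Set.Ico (0:ℝ) 1, (haar (dyadicI p.1 p.2) x : ℂ) * φ x‖^2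
      ≤ ∫ x in Set.Ico (0:ℝ) 1, ‖φ x‖^2 := by
  have h := orthonormal_haarLp.sum_inner_products_le (s := F) (hφ.toLp φ)
  rw [norm_toLp_sq_eq hφ] at h
  refine le_trans (le_of_eq ?_) h
  apply Finset.sum_congr rfl
  intro p _
  rw [inner_haarLp_toLp p hφ]

end L2setup

section keybound
variable {d : ℕ}

def avgv (g : ℝ → Fin d → ℂ) (I : Set ℝ) : Fin d → ℂ := (len I)⁻¹ • ∫ x in I, g x

lemma pnorm_le_vnorm (v : Fin d → ℂ) : ‖v‖ ≤ vnorm v := by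
  rw [pi_norm_le_iff_of_nonneg (vnorm_nonneg v)]
  exact coord_le_vnorm v

lemma vnorm_avgv_le {g : ℝ → Fin d → ℂ} {I : Set ℝ} (hg : IntegrableOn g I) :
    vnorm (avgv g I) ≤ (len I)⁻¹ * ∫ x in I, vnorm (g x) := by
  rw [avgv, vnorm_smul, abs_inv, abs_of_nonneg (by rw [len]; positivity)]
  exact mul_le_mul_of_nonneg_left (vnorm_setIntegral_le hg) (by rw [len]; positivity)

lemma len_smul_avgv {g : ℝ → Fin d → ℂ} {I : Set ℝ} (hI : len I ≠ 0) :
    (len I) • avgv g I = ∫ x in I, g x := by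
  rw [avgv, smul_smul, mul_inv_cancel₀ hI, one_smul]

lemma key_good_bound (g : ℝ → Fin d → ℂ) (lam : ℝ)
    (hg : IntegrableOn g (Set.Ico (0:ℝ) 1))
    (hA : 0 < ∫ y in Set.Ico (0:ℝ) 1, vnorm (g y)) (hlam : 1 ≤ lam) (N : ℕ)
    (F : Finset DPair) (hF : ∀ p ∈ F, p.1 < N ∧ GoodI g lam p.1 (p.2 : ℕ)) :
    ∑ p ∈ F, vnorm (∫ x in Set.Ico (0:ℝ) 1, haar (dyadicI p.1 (p.2:ℕ)) x • g x)^2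
      ≤ 2 * lam * (∫ y in Set.Ico (0:ℝ) 1, vnorm (g y))^2 := by
  classical
  set J := Set.Ico (0:ℝ) 1 with hJ
  set A := ∫ y in J, vnorm (g y) with hAdef
  -- covered predicate
  set Cov : ℕ → Prop := fun q => ∃ m' j', dyadicI N q ⊆ dyadicI m' j' ∧ Heavy g lam m' j'
    with hCov
  set isPiece : ℕ × ℕ → Prop := fun p =>
    (p.1 = N ∧ p.2 < 2^N ∧ ¬ Cov p.2) ∨ (p.2 < 2^p.1 ∧ MaxHeavy g lam p.1 p.2) with hisPiece
  set pieces : Finset (ℕ × ℕ) :=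
    ((Finset.range (N+1)) ×ˢ (Finset.range (2^N))).filter isPiece with hpieces
  have hvalid : ∀ p ∈ pieces, p.2 < 2^p.1 := by
    rintro ⟨m, q⟩ hp
    rcases (Finset.mem_filter.1 hp).2 with ⟨h1, h2, -⟩ | ⟨h1, -⟩
    · subst h1; exact h2
    · exact h1
  have hle : ∀ p ∈ pieces, p.1 ≤ N := by
    rintro ⟨m, q⟩ hp
    have := (Finset.mem_filter.1 hp).1
    rw [Finset.mem_product, Finset.mem_range] at this
    omega
  -- pieces are pairwise disjoint
  have hdisj : ∀ p ∈ pieces, ∀ q ∈ pieces, p ≠ q →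
      Disjoint (dyadicI p.1 p.2) (dyadicI q.1 q.2) := by
    rintro ⟨m, q⟩ hp ⟨m', q'⟩ hq hne
    rcases (Finset.mem_filter.1 hp).2 with ⟨e1, e2, e3⟩ | ⟨e1, e2⟩ <;>
      rcases (Finset.mem_filter.1 hq).2 with ⟨f1, f2, f3⟩ | ⟨f1, f2⟩
    · replace e1 : m = N := e1
      replace f1 : m' = N := f1
      replace e3 : ¬ Cov q := e3
      rw [show m = N from e1, show m' = N from f1]
      apply dyadicI_disjoint_same
      intro h
      apply hne
      rw [Prod.mk.injEq]
      exact ⟨by rw [e1, f1], h⟩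
    · replace e1 : m = N := e1
      replace e3 : ¬ Cov q := e3
      replace f2 : MaxHeavy g lam m' q' := f2
      rw [show m = N from e1]
      rcases dyadicI_nested_or_disjoint (n := m') (k := q') (m := N) (j := q)
        (hle _ hq) with hs | hd
      · exact absurd ⟨m', q', hs, f2.1⟩ e3
      · exact hd
    · replace f1 : m' = N := f1
      replace f3 : ¬ Cov q' := f3
      replace e2 : MaxHeavy g lam m q := e2
      rw [show m' = N from f1]
      rcases dyadicI_nested_or_disjoint (n := m) (k := q) (m := N) (j := q')
        (hle _ hp) with hs | hd
      · exact absurd ⟨m, q, hs, e2.1⟩ f3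
      · exact hd.symm
    · replace e2 : MaxHeavy g lam m q := e2
      replace f2 : MaxHeavy g lam m' q' := f2
      apply maxHeavy_disjoint e2 f2
      simpa using hne
  -- pieces cover J
  have hcover : (⋃ p ∈ pieces, dyadicI p.1 p.2) = J := by
    apply Set.Subset.antisymm
    · apply Set.iUnion₂_subset
      intro p hp
      exact dyadicI_subset_unit (hvalid p hp)
    · intro x hx
      have hx0 : x ∈ dyadicI 0 0 := by rwa [dyadicI_zero]
      rw [dyadicI_eq_biUnion (Nat.zero_le N)] at hx0
      rcases Set.mem_iUnion₂.1 hx0 with ⟨q, hq, hxq⟩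
      rw [Finset.mem_Ico] at hq
      have hqlt : q < 2^N := by simpa using hq.2
      by_cases hc : Cov q
      · obtain ⟨m', j', hsub, hh⟩ := hc
        have hj' : j' < 2^m' := dyadicI_valid_of_subset hqlt hsub
        obtain ⟨m, j, hjm, hsub2, hmax⟩ := exists_maxHeavy hj' hh
        have hmN : m ≤ N := (dyadicI_subset_iff.1 (hsub.trans hsub2)).1
        refine Set.mem_iUnion₂.2 ⟨(m, j), ?_, (hsub.trans hsub2) hxq⟩
        rw [Finset.mem_filter, Finset.mem_product, Finset.mem_range, Finset.mem_range]
        have hj2N : j < 2^N := lt_of_lt_of_le hjm (Nat.pow_le_pow_right (by norm_num) hmN)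
        exact ⟨⟨by omega, hj2N⟩, Or.inr ⟨hjm, hmax⟩⟩
      · refine Set.mem_iUnion₂.2 ⟨(N, q), ?_, hxq⟩
        rw [Finset.mem_filter, Finset.mem_product, Finset.mem_range, Finset.mem_range]
        exact ⟨⟨by omega, hqlt⟩, Or.inl ⟨rfl, hqlt, hc⟩⟩
  -- definition of fN
  set fN : ℝ → Fin d → ℂ := fun x =>
    ∑ p ∈ pieces, (dyadicI p.1 p.2).indicator (fun _ => avgv g (dyadicI p.1 p.2)) x with hfN
  have hfN_on : ∀ p ∈ pieces, ∀ x ∈ dyadicI p.1 p.2, fN x = avgv g (dyadicI p.1 p.2) := by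
    intro p hp x hx
    simp only [hfN]
    rw [Finset.sum_eq_single_of_mem p hp]
    · rw [Set.indicator_of_mem hx]
    · intro q hq hqp
      rw [Set.indicator_of_notMem]
      intro hxq
      exact (hdisj q hq p hp hqp).ne_of_mem hxq hx rfl
  -- integrability of g restricted to pieces
  have hgI : ∀ p ∈ pieces, IntegrableOn g (dyadicI p.1 p.2) :=
    fun p hp => hg.mono_set (dyadicI_subset_unit (hvalid p hp))
  -- per-piece bound
  have havg_le : ∀ p ∈ pieces,
      ∫ x in dyadicI p.1 p.2, vnorm (g x) ≤ 2 * lam * A * len (dyadicI p.1 p.2) := by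
    rintro ⟨m, q⟩ hp
    rcases (Finset.mem_filter.1 hp).2 with ⟨e1, e2, e3⟩ | ⟨e1, e2⟩
    · replace e1 : m = N := e1
      replace e3 : ¬ Cov q := e3
      have hnh : ¬ Heavy g lam m q := fun hh => e3 ⟨m, q, by rw [← e1], hh⟩
      rw [Heavy, not_lt] at hnh
      replace hnh : ∫ x in dyadicI m q, vnorm (g x) ≤ lam * A * len (dyadicI m q) := hnh
      have h1 : (1:ℝ) ≤ 2 := by norm_num
      have hlen : 0 < len (dyadicI m q) := len_dyadicI_pos m q
      show ∫ x in dyadicI m q, vnorm (g x) ≤ 2 * lam * A * len (dyadicI m q)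
      nlinarith [setIntegral_nonneg (μ := volume) (measurableSet_dyadicI m q)
        (fun x _ => vnorm_nonneg (g x))]
    · -- maximal heavy piece: compare with parent
      replace e1 : q < 2^m := e1
      replace e2 : MaxHeavy g lam m q := e2
      have hm0 : m ≠ 0 := by
        intro h
        subst h
        have hq0 : q = 0 := by
          rw [pow_zero] at e1
          omega
        subst hq0
        exact not_heavy_root hlam hA.le e2.1
      obtain ⟨m', rfl⟩ : ∃ m', m = m' + 1 := ⟨m - 1, by omega⟩
      have hq2 : q / 2 < 2^m' := by
        have := e1
        rw [pow_succ] at this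
        omega
      have hsubp : dyadicI (m'+1) q ⊆ dyadicI m' (q / 2) := by
        apply dyadicI_subset_iff.2 ⟨Nat.le_succ m', ?_⟩
        have h : m' + 1 - m' = 1 := by omega
        rw [h, pow_one]
      have hnep : dyadicI (m'+1) q ≠ dyadicI m' (q / 2) := by
        intro h
        have := (dyadicI_inj h).1
        omega
      have hnh : ¬ Heavy g lam m' (q / 2) := e2.2 m' (q/2) hsubp hnep
      rw [Heavy, not_lt] at hnh
      have hmono : ∫ x in dyadicI (m'+1) q, vnorm (g x)
          ≤ ∫ x in dyadicI m' (q/2), vnorm (g x) := by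
        apply setIntegral_mono_set
        · exact (integrableOn_vnorm hg).mono_set (dyadicI_subset_unit hq2)
        · exact Filter.Eventually.of_forall (fun x => vnorm_nonneg _)
        · exact Filter.Eventually.of_forall hsubp
      have hlen2 : len (dyadicI m' (q/2)) = 2 * len (dyadicI (m'+1) q) := by
        rw [len_dyadicI, len_dyadicI, pow_succ]
        field_simp
      calc ∫ x in dyadicI (m'+1) q, vnorm (g x) ≤ ∫ x in dyadicI m' (q/2), vnorm (g x) := hmono
        _ ≤ lam * A * len (dyadicI m' (q/2)) := hnh
        _ = 2 * lam * A * len (dyadicI (m'+1) q) := by rw [hlen2]; ring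
  have hvnorm_avgv : ∀ p ∈ pieces, vnorm (avgv g (dyadicI p.1 p.2)) ≤ 2 * lam * A := by
    intro p hp
    have h1 := vnorm_avgv_le (hgI p hp)
    have h2 := havg_le p hp
    have hlen : 0 < len (dyadicI p.1 p.2) := len_dyadicI_pos _ _
    calc vnorm (avgv g (dyadicI p.1 p.2))
        ≤ (len (dyadicI p.1 p.2))⁻¹ * ∫ x in dyadicI p.1 p.2, vnorm (g x) := h1
      _ ≤ (len (dyadicI p.1 p.2))⁻¹ * (2 * lam * A * len (dyadicI p.1 p.2)) := by
          apply mul_le_mul_of_nonneg_left h2 (by positivity)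
      _ = 2 * lam * A := by field_simp
  -- fN is bounded on J
  have hfN_bdd : ∀ x ∈ J, vnorm (fN x) ≤ 2 * lam * A := by
    intro x hx
    rw [← hcover] at hx
    rcases Set.mem_iUnion₂.1 hx with ⟨p, hp, hxp⟩
    rw [hfN_on p hp x hxp]
    exact hvnorm_avgv p hp
  -- measurability of fN
  have hfN_meas : ∀ i : Fin d, Measurable (fun x => fN x i) := by
    intro i
    rw [hfN]
    simp only [Finset.sum_apply]
    apply Finset.measurable_sum
    intro p hp
    have : (fun x => (dyadicI p.1 p.2).indicator (fun _ => avgv g (dyadicI p.1 p.2)) x i)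
        = (dyadicI p.1 p.2).indicator (fun _ => avgv g (dyadicI p.1 p.2) i) := by
      funext x
      by_cases hx : x ∈ dyadicI p.1 p.2
      · rw [Set.indicator_of_mem hx, Set.indicator_of_mem hx]
      · rw [Set.indicator_of_notMem hx, Set.indicator_of_notMem hx]
        rfl
    rw [this]
    exact measurable_const.indicator (measurableSet_dyadicI _ _)
  have hfN_measP : Measurable fN := by
    apply measurable_pi_lambda
    exact hfN_meas
  have hfN_int : IntegrableOn fN J := by
    apply Integrable.mono' (g := fun _ => 2 * lam * A)
    · exact integrable_const _
    · exact hfN_measP.aestronglyMeasurable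
    · filter_upwards [ae_restrict_mem measurableSet_Ico] with x hx
      exact (pnorm_le_vnorm _).trans (hfN_bdd x hx)
  -- splitting of integrals over pieces
  have hpw : (↑pieces : Set (ℕ × ℕ)).Pairwise (Function.onFun Disjoint
      (fun p : ℕ × ℕ => dyadicI p.1 p.2)) := by
    intro p hp q hq hne
    exact hdisj p hp q hq hne
  have hsplit : ∀ u : ℝ → (Fin d → ℂ), IntegrableOn u J →
      ∫ x in J, u x = ∑ p ∈ pieces, ∫ x in dyadicI p.1 p.2, u x := by
    intro u hu
    rw [← hcover]
    exact integral_biUnion_finset pieces (fun p _ => measurableSet_dyadicI _ _) hpw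
      (fun p hp => hu.mono_set (dyadicI_subset_unit (hvalid p hp)))
  have hsplitR : ∀ u : ℝ → ℝ, IntegrableOn u J →
      ∫ x in J, u x = ∑ p ∈ pieces, ∫ x in dyadicI p.1 p.2, u x := by
    intro u hu
    rw [← hcover]
    exact integral_biUnion_finset pieces (fun p _ => measurableSet_dyadicI _ _) hpw
      (fun p hp => hu.mono_set (dyadicI_subset_unit (hvalid p hp)))
  -- L¹ bound for fN
  have hL1 : ∫ x in J, vnorm (fN x) ≤ A := by
    rw [hsplitR _ (integrableOn_vnorm hfN_int)]
    have hterm : ∀ p ∈ pieces, ∫ x in dyadicI p.1 p.2, vnorm (fN x)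
        ≤ ∫ x in dyadicI p.1 p.2, vnorm (g x) := by
      intro p hp
      have h1 : ∫ x in dyadicI p.1 p.2, vnorm (fN x)
          = len (dyadicI p.1 p.2) * vnorm (avgv g (dyadicI p.1 p.2)) := by
        rw [setIntegral_congr_fun (measurableSet_dyadicI _ _)
          (fun x hx => by rw [hfN_on p hp x hx])]
        rw [setIntegral_const, smul_eq_mul, len, Measure.real]
      rw [h1]
      have h2 := vnorm_avgv_le (g := g) (I := dyadicI p.1 p.2) (hgI p hp)
      have hlen : 0 < len (dyadicI p.1 p.2) := len_dyadicI_pos _ _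
      calc len (dyadicI p.1 p.2) * vnorm (avgv g (dyadicI p.1 p.2))
          ≤ len (dyadicI p.1 p.2) *
            ((len (dyadicI p.1 p.2))⁻¹ * ∫ x in dyadicI p.1 p.2, vnorm (g x)) :=
            mul_le_mul_of_nonneg_left h2 hlen.le
        _ = ∫ x in dyadicI p.1 p.2, vnorm (g x) := by field_simp
    calc ∑ p ∈ pieces, ∫ x in dyadicI p.1 p.2, vnorm (fN x)
        ≤ ∑ p ∈ pieces, ∫ x in dyadicI p.1 p.2, vnorm (g x) := Finset.sum_le_sum hterm
      _ = A := (hsplitR _ (integrableOn_vnorm hg)).symm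
  -- L² bound for fN
  have hvnorm_meas : Measurable (fun x => vnorm (fN x)) := continuous_vnorm.measurable.comp hfN_measP
  have hsq_int : IntegrableOn (fun x => vnorm (fN x)^2) J := by
    apply Integrable.mono' (g := fun _ => (2*lam*A)^2)
    · exact integrable_const _
    · exact ((hvnorm_meas.pow_const 2).aestronglyMeasurable).restrict
    · filter_upwards [ae_restrict_mem measurableSet_Ico] with x hx
      rw [Real.norm_eq_abs, abs_of_nonneg (by positivity)]
      have := hfN_bdd x hx
      nlinarith [vnorm_nonneg (fN x)]
  have hL2 : ∫ x in J, vnorm (fN x)^2 ≤ 2 * lam * A^2 := by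
    have step : ∫ x in J, vnorm (fN x)^2 ≤ ∫ x in J, (2*lam*A) * vnorm (fN x) := by
      apply setIntegral_mono_on hsq_int ((integrableOn_vnorm hfN_int).const_mul _)
        measurableSet_Ico
      intro x hx
      rw [pow_two]
      exact mul_le_mul_of_nonneg_right (hfN_bdd x hx) (vnorm_nonneg _)
    rw [integral_const_mul] at step
    have h2 : (2*lam*A) * ∫ x in J, vnorm (fN x) ≤ (2*lam*A) * A :=
      mul_le_mul_of_nonneg_left hL1 (by positivity)
    calc ∫ x in J, vnorm (fN x)^2 ≤ (2*lam*A) * A := le_trans step h2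
      _ = 2 * lam * A^2 := by ring
  -- coefficient identity
  have hcoef : ∀ p ∈ F, (∫ x in J, haar (dyadicI p.1 (p.2:ℕ)) x • g x)
      = ∫ x in J, haar (dyadicI p.1 (p.2:ℕ)) x • fN x := by
    rintro ⟨n, k⟩ hpF
    obtain ⟨hnN, hgood⟩ := hF _ hpF
    replace hnN : n < N := hnN
    replace hgood : GoodI g lam n (k:ℕ) := hgood
    have hint_g : IntegrableOn (fun x => haar (dyadicI n (k:ℕ)) x • g x) J :=
      integrableOn_smul_bdd (measurable_haar _) (abs_haar_le n (k:ℕ)) hg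
    have hint_f : IntegrableOn (fun x => haar (dyadicI n (k:ℕ)) x • fN x) J :=
      integrableOn_smul_bdd (measurable_haar _) (abs_haar_le n (k:ℕ)) hfN_int
    rw [hsplit _ hint_g, hsplit _ hint_f]
    apply Finset.sum_congr rfl
    rintro ⟨m, q⟩ hq
    -- haar is constant on this piece
    have hconst : ∃ c : ℝ, ∀ x ∈ dyadicI m q, haar (dyadicI n (k:ℕ)) x = c := by
      rcases (Finset.mem_filter.1 hq).2 with ⟨e1, e2, e3⟩ | ⟨e1, e2⟩
      · replace e1 : m = N := e1
        have hnm : n < m := by omega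
        obtain ⟨c, -, hc⟩ := haar_const_on hnm
          (dyadicI_nested_or_disjoint hnm.le)
        exact ⟨c, hc⟩
      · replace e2 : MaxHeavy g lam m q := e2
        rcases lt_or_ge n m with hnm | hmn
        · obtain ⟨c, -, hc⟩ := haar_const_on hnm
            (dyadicI_nested_or_disjoint hnm.le)
          exact ⟨c, hc⟩
        · rcases dyadicI_nested_or_disjoint (n := m) (k := q) (m := n) (j := (k:ℕ)) hmn
            with hs | hd
          · exact absurd e2.1 (hgood m q hs)
          · exact ⟨0, fun x hx => haar_eq_zero (fun hx' => hd.ne_of_mem hx' hx rfl)⟩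
    obtain ⟨c, hc⟩ := hconst
    have hqmem := hq
    have hlen0 : len (dyadicI m q) ≠ 0 := (len_dyadicI_pos m q).ne'
    have e1 : ∫ x in dyadicI m q, haar (dyadicI n (k:ℕ)) x • g x
        = c • ∫ x in dyadicI m q, g x := by
      rw [setIntegral_congr_fun (measurableSet_dyadicI _ _)
        (fun x hx => by
          show haar (dyadicI n (k:ℕ)) x • g x = c • g x
          rw [hc x hx] : Set.EqOn (fun x => haar (dyadicI n (k:ℕ)) x • g x)
          (fun x => c • g x) (dyadicI m q))]
      exact integral_smul c g
    have e2 : ∫ x in dyadicI m q, haar (dyadicI n (k:ℕ)) x • fN x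
        = c • ∫ x in dyadicI m q, g x := by
      rw [setIntegral_congr_fun (measurableSet_dyadicI _ _)
        (fun x hx => by
          show haar (dyadicI n (k:ℕ)) x • fN x = c • fN x
          rw [hc x hx] : Set.EqOn (fun x => haar (dyadicI n (k:ℕ)) x • fN x)
          (fun x => c • fN x) (dyadicI m q))]
      rw [integral_smul]
      congr 1
      have e3 : ∫ x in dyadicI m q, fN x = ∫ x in dyadicI m q, avgv g (dyadicI m q) := by
        apply setIntegral_congr_fun (measurableSet_dyadicI _ _)
        intro x hx
        exact hfN_on (m, q) hqmem x hx
      rw [e3, setIntegral_const]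
      rw [show volume.real (dyadicI m q) = len (dyadicI m q) from rfl]
      exact len_smul_avgv hlen0
    rw [e1, e2]
  -- membership in L² for coordinates of fN
  have hmem : ∀ i : Fin d, MemLp (fun x => fN x i) 2 (volume.restrict J) := by
    intro i
    apply MemLp.of_bound ((hfN_meas i).aestronglyMeasurable).restrict (2*lam*A)
    filter_upwards [ae_restrict_mem measurableSet_Ico] with x hx
    exact (coord_le_vnorm _ i).trans (hfN_bdd x hx)
  have hcoord : ∀ p ∈ F, ∀ i : Fin d,
      (∫ x in J, haar (dyadicI p.1 (p.2:ℕ)) x • fN x) i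
        = ∫ x in J, (haar (dyadicI p.1 (p.2:ℕ)) x : ℂ) * fN x i := by
    intro p hpF i
    have hint_f : IntegrableOn (fun x => haar (dyadicI p.1 (p.2:ℕ)) x • fN x) J :=
      integrableOn_smul_bdd (measurable_haar _) (abs_haar_le p.1 (p.2:ℕ)) hfN_int
    have h1 := (ContinuousLinearMap.proj (R := ℂ) (φ := fun _ : Fin d => ℂ) i).integral_comp_comm
      hint_f
    have h2 : (∫ x in J, haar (dyadicI p.1 (p.2:ℕ)) x • fN x) i
        = ∫ x in J, (haar (dyadicI p.1 (p.2:ℕ)) x • fN x) i := h1.symm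
    rw [h2]
    apply integral_congr_ae
    refine Filter.Eventually.of_forall (fun x => ?_)
    show (haar (dyadicI p.1 (p.2:ℕ)) x • fN x) i = _
    rw [Pi.smul_apply, Complex.real_smul]
  -- integrability of coordinate squares
  have hsqi_int : ∀ i : Fin d, Integrable (fun x => ‖fN x i‖^2) (volume.restrict J) := by
    intro i
    apply Integrable.mono' (g := fun _ => (2*lam*A)^2)
    · exact integrable_const _
    · exact ((((hfN_meas i).norm).pow_const 2).aestronglyMeasurable).restrict
    · filter_upwards [ae_restrict_mem measurableSet_Ico] with x hx
      rw [Real.norm_eq_abs, abs_of_nonneg (by positivity)]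
      have h1 := (coord_le_vnorm (fN x) i).trans (hfN_bdd x hx)
      nlinarith [norm_nonneg (fN x i)]
  -- put everything together
  calc ∑ p ∈ F, vnorm (∫ x in J, haar (dyadicI p.1 (p.2:ℕ)) x • g x)^2
      = ∑ p ∈ F, ∑ i : Fin d, ‖(∫ x in J, haar (dyadicI p.1 (p.2:ℕ)) x • fN x) i‖^2 := by
        apply Finset.sum_congr rfl
        intro p hpF
        rw [hcoef p hpF, vnorm_sq]
    _ = ∑ i : Fin d, ∑ p ∈ F, ‖∫ x in J, (haar (dyadicI p.1 (p.2:ℕ)) x : ℂ) * fN x i‖^2 := by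
        rw [Finset.sum_comm]
        apply Finset.sum_congr rfl
        intro i _
        apply Finset.sum_congr rfl
        intro p hpF
        rw [hcoord p hpF i]
    _ ≤ ∑ i : Fin d, ∫ x in J, ‖fN x i‖^2 := by
        apply Finset.sum_le_sum
        intro i _
        exact bessel_haar (hmem i) F
    _ = ∫ x in J, ∑ i : Fin d, ‖fN x i‖^2 := by
        rw [← integral_finset_sum Finset.univ (fun i _ => hsqi_int i)]
    _ = ∫ x in J, vnorm (fN x)^2 := by
        apply integral_congr_ae
        refine Filter.Eventually.of_forall (fun x => ?_)
        show ∑ i : Fin d, ‖fN x i‖^2 = vnorm (fN x)^2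
        rw [vnorm_sq]
    _ ≤ 2 * lam * A^2 := hL2

end keybound

section helpers

lemma ofReal_tsum_tsum {S : ∀ n : ℕ, Fin (2^n) → ℝ} (h0 : ∀ n k, 0 ≤ S n k) (n₀ : ℕ)
    (hz : ∀ n, n₀ < n → ∀ k, S n k = 0) :
    ENNReal.ofReal (∑' (n:ℕ), ∑' (k : Fin (2^n)), S n k)
      = ∑' (n:ℕ), ∑' (k : Fin (2^n)), ENNReal.ofReal (S n k) := by
  have hT : (fun n => ∑' (k : Fin (2^n)), S n k) = fun n => ∑ k, S n k := by
    funext n; exact tsum_fintype _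
  have hsum : Summable (fun n => ∑ k, S n k) := by
    apply summable_of_ne_finset_zero (s := Finset.range (n₀+1))
    intro n hn
    apply Finset.sum_eq_zero
    intro k _
    exact hz n (by simpa [Finset.mem_range] using hn) k
  calc ENNReal.ofReal (∑' (n:ℕ), ∑' (k : Fin (2^n)), S n k)
      = ENNReal.ofReal (∑' (n:ℕ), ∑ k, S n k) := by rw [hT]
    _ = ∑' (n:ℕ), ENNReal.ofReal (∑ k, S n k) :=
        ENNReal.ofReal_tsum_of_nonneg (fun n => Finset.sum_nonneg (fun k _ => h0 n k)) hsum
    _ = ∑' (n:ℕ), ∑' (k : Fin (2^n)), ENNReal.ofReal (S n k) := by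
        apply tsum_congr
        intro n
        rw [tsum_fintype]
        exact ENNReal.ofReal_sum_of_nonneg (fun k _ => h0 n k)

lemma subset_gen_le {n₀ k₀ n k : ℕ} (h : dyadicI n₀ k₀ ⊆ dyadicI n k) : n ≤ n₀ :=
  (dyadicI_subset_iff.1 h).1

lemma countable_dyadic_family {L : Set (Set ℝ)} (hL : ∀ I ∈ L, IsDyadic I) : L.Countable := by
  apply Set.Countable.mono (s₂ := Set.range (fun p : ℕ × ℕ => dyadicI p.1 p.2))
  · intro I hI
    obtain ⟨n, k, -, rfl⟩ := hL I hI
    exact ⟨(n, k), rfl⟩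
  · exact Set.countable_range _

end helpers

open scoped Classical in
/-- **Packing of the second stopping condition.** There is an absolute constant `C`
(independent of `d`) such that: if `g ∈ L¹(J; ℂ^d)` with `∫_J ‖g‖ > 0`, `λ > 0`, and `{L}`
is a collection of pairwise disjoint dyadic subintervals of `J` each satisfying
`∑_{I ∈ D : L ⊆ I ⊆ J} ‖(g,h_I)‖²/|I| > λ² ⟨‖g‖⟩_J²`, then each such `L` is contained in
`{x ∈ J : (Sg(x))² > λ² ⟨‖g‖⟩_J²}` and `∑_L |L| ≤ C λ⁻¹ |J|`. -/
theorem second_stopping_condition_packing :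
    ∃ C : ℝ, 0 < C ∧
      ∀ (d : ℕ) (g : ℝ → Fin d → ℂ), IntegrableOn g (Set.Ico (0 : ℝ) 1) →
        0 < ∫ y in Set.Ico (0 : ℝ) 1, vnorm (g y) →
        ∀ lam : ℝ, 0 < lam →
          ∀ L : Set (Set ℝ), (∀ I ∈ L, IsDyadic I) → L.PairwiseDisjoint id →
            (∀ I₀ ∈ L,
              lam ^ 2 *
                  ((len (Set.Ico (0 : ℝ) 1))⁻¹ * ∫ y in Set.Ico (0 : ℝ) 1, vnorm (g y)) ^ 2 <
                ∑' (n : ℕ) (k : Fin (2 ^ n)),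
                  if I₀ ⊆ dyadicI n (k : ℕ) then
                    vnorm (haarCoef g (dyadicI n (k : ℕ))) ^ 2 / len (dyadicI n (k : ℕ))
                  else 0) →
            (∀ I₀ ∈ L,
              I₀ ⊆ {x ∈ Set.Ico (0 : ℝ) 1 |
                ENNReal.ofReal (lam ^ 2 *
                    ((len (Set.Ico (0 : ℝ) 1))⁻¹ * ∫ y in Set.Ico (0 : ℝ) 1, vnorm (g y)) ^ 2) <
                  ∑' (n : ℕ) (k : Fin (2 ^ n)),
                    ENNReal.ofReal (vnorm (haarCoef g (dyadicI n (k : ℕ))) ^ 2 *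
                      (dyadicI n (k : ℕ)).indicator (fun _ => (1 : ℝ)) x /
                        len (dyadicI n (k : ℕ)))}) ∧
            (∑' I : L, volume (I : Set ℝ))
              ≤ ENNReal.ofReal (C * lam⁻¹ * len (Set.Ico (0 : ℝ) 1)) := by
  refine ⟨3, by norm_num, ?_⟩
  intro d g hg hA lam hlam L hLdy hLdisj hcond
  have hlenJ : len (Set.Ico (0:ℝ) 1) = 1 := by
    rw [len, Real.volume_Ico, ENNReal.toReal_ofReal (by norm_num)]
    norm_num
  set A := ∫ y in Set.Ico (0:ℝ) 1, vnorm (g y) with hAdef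
  have hτ : lam^2 * ((len (Set.Ico (0:ℝ) 1))⁻¹ * A)^2 = lam^2 * A^2 := by
    rw [hlenJ]; ring
  constructor
  · -- Conclusion 1: containment in the level set of the square function
    intro I₀ hI₀ x hx
    obtain ⟨n₀, k₀, hk₀, rfl⟩ := hLdy I₀ hI₀
    have hxJ : x ∈ Set.Ico (0:ℝ) 1 := dyadicI_subset_unit hk₀ hx
    have hcnd := hcond _ hI₀
    refine ⟨hxJ, ?_⟩
    set S : ∀ n : ℕ, Fin (2^n) → ℝ := fun n k =>
      if dyadicI n₀ k₀ ⊆ dyadicI n (k:ℕ) then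
        vnorm (haarCoef g (dyadicI n (k:ℕ)))^2 / len (dyadicI n (k:ℕ)) else 0 with hS
    have h0 : ∀ n k, 0 ≤ S n k := by
      intro n k
      rw [hS]
      dsimp only
      split
      · have := len_dyadicI_pos n (k:ℕ)
        positivity
      · exact le_refl 0
    have hz : ∀ n, n₀ < n → ∀ k, S n k = 0 := by
      intro n hn k
      rw [hS]
      dsimp only
      rw [if_neg]
      intro hsub
      exact absurd (subset_gen_le hsub) (by omega)
    have hpos : 0 ≤ lam^2 * ((len (Set.Ico (0:ℝ) 1))⁻¹ * A)^2 := by positivity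
    have hlt : ENNReal.ofReal (lam^2 * ((len (Set.Ico (0:ℝ) 1))⁻¹ * A)^2)
        < ∑' (n:ℕ), ∑' (k : Fin (2^n)), ENNReal.ofReal (S n k) := by
      rw [← ofReal_tsum_tsum h0 n₀ hz]
      exact (ENNReal.ofReal_lt_ofReal_iff (lt_of_le_of_lt hpos hcnd)).2 hcnd
    refine lt_of_lt_of_le hlt ?_
    apply ENNReal.tsum_le_tsum
    intro n
    apply ENNReal.tsum_le_tsum
    intro k
    apply ENNReal.ofReal_le_ofReal
    rw [hS]
    dsimp only
    split
    · rename_i hsub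
      rw [Set.indicator_of_mem (hsub hx), mul_one]
    · apply div_nonneg
      · apply mul_nonneg (by positivity)
        exact Set.indicator_nonneg (fun _ _ => zero_le_one) x
      · exact (len_dyadicI_pos n (k:ℕ)).le
  · -- Conclusion 2: packing bound
    have hLc : L.Countable := countable_dyadic_family hLdy
    have hmeasL : ∀ I ∈ L, MeasurableSet I := by
      intro I hI
      obtain ⟨n, k, -, rfl⟩ := hLdy I hI
      exact measurableSet_dyadicI n k
    have hsubJ : ∀ I ∈ L, I ⊆ Set.Ico (0:ℝ) 1 := by
      intro I hI
      obtain ⟨n, k, hk, rfl⟩ := hLdy I hI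
      exact dyadicI_subset_unit hk
    have htotal : ∑' (I : L), volume (I : Set ℝ) = volume (⋃ I ∈ L, I) :=
      (measure_biUnion hLc hLdisj hmeasL).symm
    rw [htotal, hlenJ, mul_one]
    by_cases hlam1 : lam < 1
    · calc volume (⋃ I ∈ L, I) ≤ volume (Set.Ico (0:ℝ) 1) := by
            apply measure_mono
            exact Set.iUnion₂_subset hsubJ
        _ = ENNReal.ofReal 1 := by rw [Real.volume_Ico]; norm_num
        _ ≤ ENNReal.ofReal (3 * lam⁻¹) := by
            apply ENNReal.ofReal_le_ofReal
            rw [show (3:ℝ) * lam⁻¹ = 3 / lam by ring, le_div_iff₀ hlam]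
            linarith
    · push_neg at hlam1
      set Bad : Set ℝ → Prop := fun I =>
        ∃ m j : ℕ, I ⊆ dyadicI m j ∧ Heavy g lam m j with hBad
      set Lb : Set (Set ℝ) := {I | I ∈ L ∧ Bad I} with hLb
      set Lg : Set (Set ℝ) := {I | I ∈ L ∧ ¬ Bad I} with hLg
      have hsplit : volume (⋃ I ∈ L, I) ≤ volume (⋃ I ∈ Lb, I) + volume (⋃ I ∈ Lg, I) := by
        refine le_trans (measure_mono ?_) (measure_union_le _ _)
        intro x hx
        rcases Set.mem_iUnion₂.1 hx with ⟨I, hI, hxI⟩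
        by_cases hb : Bad I
        · exact Or.inl (Set.mem_iUnion₂.2 ⟨I, ⟨hI, hb⟩, hxI⟩)
        · exact Or.inr (Set.mem_iUnion₂.2 ⟨I, ⟨hI, hb⟩, hxI⟩)
      -- bad part
      have hbad : volume (⋃ I ∈ Lb, I) ≤ ENNReal.ofReal lam⁻¹ := by
        refine le_trans (measure_mono ?_) (measure_biUnion_maxHeavy hg hA hlam)
        intro x hx
        rcases Set.mem_iUnion₂.1 hx with ⟨I, hI, hxI⟩
        obtain ⟨m, j, hsub, hheavy⟩ := hI.2
        obtain ⟨n, k, hk, rfl⟩ := hLdy I hI.1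
        have hj : j < 2^m := dyadicI_valid_of_subset hk hsub
        obtain ⟨m', j', hj', hsub', hmax⟩ := exists_maxHeavy hj hheavy
        exact Set.mem_iUnion₂.2 ⟨(m', j'), ⟨hj', hmax⟩, hsub' (hsub hxI)⟩
      -- good part
      have hLgc : Lg.Countable := hLc.mono (fun I hI => hI.1)
      have hLgdisj : Lg.PairwiseDisjoint id :=
        hLdisj.subset (fun I hI => hI.1)
      have hLgmeas : ∀ I ∈ Lg, MeasurableSet I := fun I hI => hmeasL I hI.1
      have hgoodmeasure : volume (⋃ I ∈ Lg, I) = ∑' (I : Lg), volume (I : Set ℝ) :=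
        measure_biUnion hLgc hLgdisj hLgmeas
      -- the hypothesis bound in ENNReal per good interval
      have hIbound : ∀ I ∈ Lg, ENNReal.ofReal (lam^2 * A^2)
          ≤ ∑' (p : DPair), ENNReal.ofReal
            (if I ⊆ dyadicI p.1 (p.2:ℕ) then
              vnorm (haarCoef g (dyadicI p.1 (p.2:ℕ)))^2 / len (dyadicI p.1 (p.2:ℕ)) else 0) := by
        intro I hI
        obtain ⟨n₀, k₀, hk₀, rfl⟩ := hLdy I hI.1
        have hcnd := hcond _ hI.1
        rw [hτ] at hcnd
        set S : ∀ n : ℕ, Fin (2^n) → ℝ := fun n k =>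
          if dyadicI n₀ k₀ ⊆ dyadicI n (k:ℕ) then
            vnorm (haarCoef g (dyadicI n (k:ℕ)))^2 / len (dyadicI n (k:ℕ)) else 0 with hS
        have h0 : ∀ n k, 0 ≤ S n k := by
          intro n k
          rw [hS]; dsimp only
          split
          · have := len_dyadicI_pos n (k:ℕ)
            positivity
          · exact le_refl 0
        have hz : ∀ n, n₀ < n → ∀ k, S n k = 0 := by
          intro n hn k
          rw [hS]; dsimp only
          rw [if_neg]
          intro hsub
          exact absurd (subset_gen_le hsub) (by omega)
        rw [ENNReal.tsum_sigma (fun n k => ENNReal.ofReal (S n k)), ← ofReal_tsum_tsum h0 n₀ hz]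
        exact ENNReal.ofReal_le_ofReal (le_of_lt hcnd)
      -- per-pair bound
      set bnd : DPair → ℝ≥0∞ := fun p =>
        if GoodI g lam p.1 (p.2:ℕ) then
          ENNReal.ofReal (vnorm (haarCoef g (dyadicI p.1 (p.2:ℕ)))^2) else 0 with hbnd
      have hperp : ∀ p : DPair,
          (∑' (I : Lg), ENNReal.ofReal
            (if (I:Set ℝ) ⊆ dyadicI p.1 (p.2:ℕ) then
              vnorm (haarCoef g (dyadicI p.1 (p.2:ℕ)))^2 / len (dyadicI p.1 (p.2:ℕ)) else 0)
            * volume (I : Set ℝ)) ≤ bnd p := by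
        intro p
        by_cases hex : ∃ I ∈ Lg, I ⊆ dyadicI p.1 (p.2:ℕ)
        · obtain ⟨I₁, hI₁, hsub₁⟩ := hex
          have hGood : GoodI g lam p.1 (p.2:ℕ) := by
            intro m j hsup hh
            exact hI₁.2 ⟨m, j, hsub₁.trans hsup, hh⟩
          have hstep : ∀ I : Lg, ENNReal.ofReal
              (if (I:Set ℝ) ⊆ dyadicI p.1 (p.2:ℕ) then
                vnorm (haarCoef g (dyadicI p.1 (p.2:ℕ)))^2 / len (dyadicI p.1 (p.2:ℕ)) else 0)
              * volume (I : Set ℝ)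
              ≤ ENNReal.ofReal (vnorm (haarCoef g (dyadicI p.1 (p.2:ℕ)))^2 /
                  len (dyadicI p.1 (p.2:ℕ))) * volume ((I : Set ℝ) ∩ dyadicI p.1 (p.2:ℕ)) := by
            intro I
            by_cases hsub : (I:Set ℝ) ⊆ dyadicI p.1 (p.2:ℕ)
            · rw [if_pos hsub, Set.inter_eq_self_of_subset_left hsub]
            · rw [if_neg hsub, ENNReal.ofReal_zero, zero_mul]
              exact zero_le
          calc ∑' (I : Lg), ENNReal.ofReal
                (if (I:Set ℝ) ⊆ dyadicI p.1 (p.2:ℕ) then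
                  vnorm (haarCoef g (dyadicI p.1 (p.2:ℕ)))^2 / len (dyadicI p.1 (p.2:ℕ)) else 0)
                * volume (I : Set ℝ)
              ≤ ∑' (I : Lg), ENNReal.ofReal (vnorm (haarCoef g (dyadicI p.1 (p.2:ℕ)))^2 /
                  len (dyadicI p.1 (p.2:ℕ))) * volume ((I : Set ℝ) ∩ dyadicI p.1 (p.2:ℕ)) :=
                ENNReal.tsum_le_tsum hstep
            _ = ENNReal.ofReal (vnorm (haarCoef g (dyadicI p.1 (p.2:ℕ)))^2 /
                  len (dyadicI p.1 (p.2:ℕ)))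
                * ∑' (I : Lg), volume ((I : Set ℝ) ∩ dyadicI p.1 (p.2:ℕ)) :=
                ENNReal.tsum_mul_left
            _ ≤ ENNReal.ofReal (vnorm (haarCoef g (dyadicI p.1 (p.2:ℕ)))^2 /
                  len (dyadicI p.1 (p.2:ℕ))) * volume (dyadicI p.1 (p.2:ℕ)) := by
                apply mul_le_mul_right
                have hdisj2 : Lg.PairwiseDisjoint
                    (fun I => I ∩ dyadicI p.1 (p.2:ℕ)) := by
                  intro a ha b hb hne
                  exact (hLgdisj ha hb hne).mono Set.inter_subset_left Set.inter_subset_left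
                have hmeas2 : ∀ I ∈ Lg, MeasurableSet (I ∩ dyadicI p.1 (p.2:ℕ)) :=
                  fun I hI => (hLgmeas I hI).inter (measurableSet_dyadicI _ _)
                rw [← measure_biUnion hLgc hdisj2 hmeas2]
                apply measure_mono
                exact Set.iUnion₂_subset (fun I _ => Set.inter_subset_right)
            _ = bnd p := by
                rw [hbnd]
                dsimp only
                have hnn : 0 ≤ vnorm (haarCoef g (dyadicI p.1 (p.2:ℕ)))^2 /
                    len (dyadicI p.1 (p.2:ℕ)) := by
                  have := len_dyadicI_pos p.1 (p.2:ℕ)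
                  positivity
                rw [if_pos hGood, volume_dyadicI, ← len_dyadicI p.1 (p.2:ℕ),
                  ← ENNReal.ofReal_mul hnn,
                  div_mul_cancel₀ _ (len_dyadicI_pos p.1 (p.2:ℕ)).ne']
        · push_neg at hex
          have hzero : ∀ I : Lg, ENNReal.ofReal
              (if (I:Set ℝ) ⊆ dyadicI p.1 (p.2:ℕ) then
                vnorm (haarCoef g (dyadicI p.1 (p.2:ℕ)))^2 / len (dyadicI p.1 (p.2:ℕ)) else 0)
              * volume (I : Set ℝ) = 0 := by
            intro I
            rw [if_neg (hex I I.2), ENNReal.ofReal_zero, zero_mul]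
          rw [tsum_congr hzero]
          simp
      -- total bound on bnd via Bessel
      have hbndsum : ∑' (p : DPair), bnd p ≤ ENNReal.ofReal (2 * lam * A^2) := by
        rw [ENNReal.tsum_eq_iSup_sum]
        apply iSup_le
        intro F
        set F' := F.filter (fun p : DPair => GoodI g lam p.1 (p.2:ℕ)) with hF'
        have he : ∑ p ∈ F, bnd p = ∑ p ∈ F', ENNReal.ofReal
            (vnorm (haarCoef g (dyadicI p.1 (p.2:ℕ)))^2) := by
          rw [hF', Finset.sum_filter]
        rw [he, ← ENNReal.ofReal_sum_of_nonneg (fun p _ => by positivity)]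
        apply ENNReal.ofReal_le_ofReal
        have hkey := key_good_bound g lam hg hA hlam1 (F'.sup (fun p : DPair => p.1) + 1) F' ?_
        · exact hkey
        · intro p hp
          constructor
          · have h := Finset.le_sup (f := fun p : DPair => p.1) hp
            replace h : p.1 ≤ F'.sup (fun p : DPair => p.1) := h
            omega
          · exact (Finset.mem_filter.1 hp).2
      -- combine for the good part
      have hgood : volume (⋃ I ∈ Lg, I) ≤ ENNReal.ofReal (2 * lam⁻¹) := by
        rw [hgoodmeasure]
        have hchain : ENNReal.ofReal (lam^2 * A^2) * ∑' (I : Lg), volume (I : Set ℝ)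
            ≤ ENNReal.ofReal (2 * lam * A^2) := by
          calc ENNReal.ofReal (lam^2 * A^2) * ∑' (I : Lg), volume (I : Set ℝ)
              = ∑' (I : Lg), ENNReal.ofReal (lam^2 * A^2) * volume (I : Set ℝ) :=
                ENNReal.tsum_mul_left.symm
            _ ≤ ∑' (I : Lg), (∑' (p : DPair), ENNReal.ofReal
                  (if (I:Set ℝ) ⊆ dyadicI p.1 (p.2:ℕ) then
                    vnorm (haarCoef g (dyadicI p.1 (p.2:ℕ)))^2 / len (dyadicI p.1 (p.2:ℕ))
                  else 0)) * volume (I : Set ℝ) := by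
                apply ENNReal.tsum_le_tsum
                intro I
                exact mul_le_mul_left (hIbound I I.2) _
            _ = ∑' (I : Lg), ∑' (p : DPair), ENNReal.ofReal
                  (if (I:Set ℝ) ⊆ dyadicI p.1 (p.2:ℕ) then
                    vnorm (haarCoef g (dyadicI p.1 (p.2:ℕ)))^2 / len (dyadicI p.1 (p.2:ℕ))
                  else 0) * volume (I : Set ℝ) := by
                apply tsum_congr
                intro I
                exact ENNReal.tsum_mul_right.symm
            _ = ∑' (p : DPair), ∑' (I : Lg), ENNReal.ofReal
                  (if (I:Set ℝ) ⊆ dyadicI p.1 (p.2:ℕ) then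
                    vnorm (haarCoef g (dyadicI p.1 (p.2:ℕ)))^2 / len (dyadicI p.1 (p.2:ℕ))
                  else 0) * volume (I : Set ℝ) := ENNReal.tsum_comm
            _ ≤ ∑' (p : DPair), bnd p := ENNReal.tsum_le_tsum hperp
            _ ≤ ENNReal.ofReal (2 * lam * A^2) := hbndsum
        have hposA : (0:ℝ) < lam^2 * A^2 := by positivity
        have hne0 : ENNReal.ofReal (lam^2 * A^2) ≠ 0 := by
          simp [ENNReal.ofReal_eq_zero]
          linarith
        calc ∑' (I : Lg), volume (I : Set ℝ)
            ≤ ENNReal.ofReal (2 * lam * A^2) / ENNReal.ofReal (lam^2 * A^2) := by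
              rw [ENNReal.le_div_iff_mul_le (Or.inl hne0) (Or.inl ENNReal.ofReal_ne_top),
                mul_comm]
              exact hchain
          _ ≤ ENNReal.ofReal (2 * lam⁻¹) := by
              apply ENNReal.div_le_of_le_mul
              rw [← ENNReal.ofReal_mul (by positivity)]
              apply ENNReal.ofReal_le_ofReal
              have hl0 : lam ≠ 0 := by linarith
              have he : 2 * lam⁻¹ * (lam^2 * A^2) = 2 * lam * A^2 := by
                field_simp
              rw [he]
      calc volume (⋃ I ∈ L, I) ≤ volume (⋃ I ∈ Lb, I) + volume (⋃ I ∈ Lg, I) := hsplit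
        _ ≤ ENNReal.ofReal lam⁻¹ + ENNReal.ofReal (2 * lam⁻¹) :=
            add_le_add hbad hgood
        _ = ENNReal.ofReal (3 * lam⁻¹) := by
            rw [← ENNReal.ofReal_add (by positivity) (by positivity)]
            congr 1
            ring
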